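/- Let R be a ring and S a multiplicatively closed subset of R consisting of central regular elements. Then R is P-symmetric if and only if S^{-1}R is P-symmetric. -/

import Mathlib

/-- A (two-sided) ideal `P` of a ring is prime if it is proper and for all `a b`,
`a R b ⊆ P` implies `a ∈ P` or `b ∈ P`. -/
def IsPrimeTwoSided {R : Type*} [Ring R] (P : TwoSidedIdeal R) : Prop :=
  P ≠ ⊤ ∧ ∀ a b : R, (∀ r : R, a * r * b ∈ P) → a ∈ P ∨ b ∈ P

/-- The prime radical `P(R)`: the intersection of all prime (two-sided) ideals of `R`. -/
def primeRadical (R : Type*) [Ring R] : Set R :=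
  {x | ∀ P : TwoSidedIdeal R, IsPrimeTwoSided P → x ∈ P}

/-- A ring `R` is `P`-symmetric if `a * b * c = 0` implies `b * a * c ∈ P(R)`. -/
def IsPSymmetric (R : Type*) [Ring R] : Prop :=
  ∀ a b c : R, a * b * c = 0 → b * a * c ∈ primeRadical R

section StronglyNilpotent

variable {R : Type*} [Ring R]

/-- `x` is strongly nilpotent: every m-sequence starting at `x` eventually vanishes. -/
def SNil (x : R) : Prop :=
  ∀ f : ℕ → R, f 0 = x → (∀ n, ∃ r, f (n + 1) = f n * r * f n) → ∃ n, f n = 0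

lemma mem_primeRadical_of_sNil {x : R} (hx : SNil x) : x ∈ primeRadical R := by
  intro P hP
  by_contra hxP
  have key : ∀ y : R, y ∉ P → ∃ r, y * r * y ∉ P := by
    intro y hy
    by_contra h
    push_neg at h
    rcases hP.2 y y h with h' | h' <;> exact hy h'
  let g : ℕ → {y : R // y ∉ P} := fun n =>
    Nat.rec ⟨x, hxP⟩
      (fun _ p => ⟨p.1 * (key p.1 p.2).choose * p.1, (key p.1 p.2).choose_spec⟩) n
  obtain ⟨n, hn⟩ := hx (fun n => (g n).1) rfl
    (fun n => ⟨(key (g n).1 (g n).2).choose, rfl⟩)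
  exact (g n).2 (by rw [hn]; exact P.zero_mem)

lemma span_mul_span_mem (Q : TwoSidedIdeal R) {a b : R} (hab : ∀ r : R, a * r * b ∈ Q)
    {α β : R} (hα : α ∈ TwoSidedIdeal.span {a}) (hβ : β ∈ TwoSidedIdeal.span {b}) (r : R) :
    α * r * β ∈ Q := by
  have hbJ : ∀ r' : R, a * r' * β ∈ Q := by
    let J : TwoSidedIdeal R := TwoSidedIdeal.mk' {y | ∀ r' : R, a * r' * y ∈ Q}
      (fun r' => by simpa using Q.zero_mem)
      (fun {u v} hu hv r' => by rw [mul_add]; exact Q.add_mem (hu r') (hv r'))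
      (fun {u} hu r' => by rw [mul_neg]; exact Q.neg_mem (hu r'))
      (fun {u v} hv r' => by
        rw [show a * r' * (u * v) = a * (r' * u) * v by simp only [mul_assoc]]
        exact hv (r' * u))
      (fun {u v} hu r' => by
        rw [show a * r' * (u * v) = (a * r' * u) * v by simp only [mul_assoc]]
        exact Q.mul_mem_right _ _ (hu r'))
    have hβJ : β ∈ J := TwoSidedIdeal.mem_span_iff.mp hβ J
      (by intro y hy
          rcases hy with rfl
          rw [SetLike.mem_coe, TwoSidedIdeal.mem_mk']
          exact hab)
    rw [TwoSidedIdeal.mem_mk'] at hβJ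
    exact hβJ
  let I : TwoSidedIdeal R := TwoSidedIdeal.mk' {y | ∀ r' : R, y * r' * β ∈ Q}
    (fun r' => by simpa using Q.zero_mem)
    (fun {u v} hu hv r' => by rw [add_mul, add_mul]; exact Q.add_mem (hu r') (hv r'))
    (fun {u} hu r' => by rw [neg_mul, neg_mul]; exact Q.neg_mem (hu r'))
    (fun {u v} hv r' => by
      rw [show u * v * r' * β = u * (v * r' * β) by simp only [mul_assoc]]
      exact Q.mul_mem_left _ _ (hv r'))
    (fun {u v} hu r' => by
      rw [show u * v * r' * β = u * (v * r') * β by simp only [mul_assoc]]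
      exact hu (v * r'))
  have hαI : α ∈ I := TwoSidedIdeal.mem_span_iff.mp hα I
    (by intro y hy
        rcases hy with rfl
        rw [SetLike.mem_coe, TwoSidedIdeal.mem_mk']
        exact hbJ)
  rw [TwoSidedIdeal.mem_mk'] at hαI
  exact hαI r

lemma sNil_of_mem_primeRadical {x : R} (hx : x ∈ primeRadical R) : SNil x := by
  intro f hf0 hstep
  by_contra hcon
  push_neg at hcon
  set 𝒮 : Set (TwoSidedIdeal R) := {I | ∀ n, f n ∉ I} with h𝒮
  have hbot : (⊥ : TwoSidedIdeal R) ∈ 𝒮 := fun n hn => hcon n ((TwoSidedIdeal.mem_bot R).mp hn)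
  have hub : ∀ c ⊆ 𝒮, IsChain (· ≤ ·) c → ∀ y ∈ c, ∃ ub ∈ 𝒮, ∀ z ∈ c, z ≤ ub := by
    intro c hc𝒮 hchain y hyc
    refine ⟨TwoSidedIdeal.mk' (⋃ I ∈ c, (I : Set R))
      (Set.mem_biUnion hyc y.zero_mem)
      ?_ ?_ ?_ ?_, ?_, ?_⟩
    · rintro u v hu hv
      obtain ⟨I, hIc, hu⟩ := Set.mem_iUnion₂.mp hu
      obtain ⟨J, hJc, hv⟩ := Set.mem_iUnion₂.mp hv
      rcases eq_or_ne I J with rfl | hIJ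
      · exact Set.mem_biUnion hIc (I.add_mem hu hv)
      · rcases hchain hIc hJc hIJ with h | h
        · exact Set.mem_biUnion hJc (J.add_mem (h hu) hv)
        · exact Set.mem_biUnion hIc (I.add_mem hu (h hv))
    · rintro u hu
      obtain ⟨I, hIc, hu⟩ := Set.mem_iUnion₂.mp hu
      exact Set.mem_biUnion hIc (I.neg_mem hu)
    · rintro u v hv
      obtain ⟨I, hIc, hv⟩ := Set.mem_iUnion₂.mp hv
      exact Set.mem_biUnion hIc (I.mul_mem_left _ _ hv)
    · rintro u v hu
      obtain ⟨I, hIc, hu⟩ := Set.mem_iUnion₂.mp hu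
      exact Set.mem_biUnion hIc (I.mul_mem_right _ _ hu)
    · intro n hn
      rw [TwoSidedIdeal.mem_mk'] at hn
      obtain ⟨I, hIc, hn⟩ := Set.mem_iUnion₂.mp hn
      exact hc𝒮 hIc n hn
    · intro z hzc u hu
      rw [TwoSidedIdeal.mem_mk']
      exact Set.mem_biUnion hzc hu
  obtain ⟨Q, -, hQ⟩ := zorn_le_nonempty₀ 𝒮 hub ⊥ hbot
  have hfQ : ∀ n, f n ∉ Q := hQ.1
  have hmono : ∀ (I : TwoSidedIdeal R) (i : ℕ), f i ∈ I → ∀ k, i ≤ k → f k ∈ I := by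
    intro I i hi k hk
    induction k, hk using Nat.le_induction with
    | base => exact hi
    | succ n hn ih =>
      obtain ⟨r, hr⟩ := hstep n
      rw [hr]
      exact I.mul_mem_right _ _ (I.mul_mem_right _ _ ih)
  have hprime : IsPrimeTwoSided Q := by
    constructor
    · intro h
      exact hfQ 0 (by rw [h]; exact TwoSidedIdeal.mem_top R)
    · intro a b hab
      by_contra hcon2
      push_neg at hcon2
      obtain ⟨ha, hb⟩ := hcon2
      have hJa : Q ⊔ TwoSidedIdeal.span {a} ∉ 𝒮 := fun hmem =>
        ha (hQ.2 hmem le_sup_left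
          (TwoSidedIdeal.mem_sup_right (TwoSidedIdeal.subset_span (Set.mem_singleton a))))
      have hJb : Q ⊔ TwoSidedIdeal.span {b} ∉ 𝒮 := fun hmem =>
        hb (hQ.2 hmem le_sup_left
          (TwoSidedIdeal.mem_sup_right (TwoSidedIdeal.subset_span (Set.mem_singleton b))))
      simp only [h𝒮, Set.mem_setOf_eq, not_forall, not_not] at hJa hJb
      obtain ⟨i, hi⟩ := hJa
      obtain ⟨j, hj⟩ := hJb
      have hka := hmono _ i hi (max i j) (le_max_left _ _)
      have hkb := hmono _ j hj (max i j) (le_max_right _ _)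
      rw [TwoSidedIdeal.mem_sup] at hka hkb
      obtain ⟨q, hq, α, hα, hqα⟩ := hka
      obtain ⟨q', hq', β, hβ, hq'β⟩ := hkb
      obtain ⟨r, hr⟩ := hstep (max i j)
      have heq : f (max i j + 1) = q * r * q' + q * r * β + α * r * q' + α * r * β := by
        have : f (max i j + 1) = (q + α) * r * (q' + β) := by rw [hqα, hq'β]; exact hr
        rw [this]; noncomm_ring
      have hfmem : f (max i j + 1) ∈ Q := by
        rw [heq]
        refine Q.add_mem (Q.add_mem (Q.add_mem ?_ ?_) ?_) ?_
        · exact Q.mul_mem_right _ _ (Q.mul_mem_right _ _ hq)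
        · exact Q.mul_mem_right _ _ (Q.mul_mem_right _ _ hq)
        · exact Q.mul_mem_left _ _ hq'
        · exact span_mul_span_mem Q hab hα hβ r
      exact hfQ _ hfmem
  exact hfQ 0 (by rw [hf0]; exact hx Q hprime)

lemma primeRadical_mul_mem_left {x : R} (c : R) (hx : x ∈ primeRadical R) :
    c * x ∈ primeRadical R := fun P hP => P.mul_mem_left _ _ (hx P hP)

end StronglyNilpotent

section Loc

open OreLocalization

variable {R : Type*} [Ring R] {S : Submonoid R} [OreLocalization.OreSet S]

/-- decomposition of an element of the localization -/
lemma loc_decomp (z : R[S⁻¹]) : ∃ (q : R) (t : S), z = ((1 : R) /ₒ t) * (q /ₒ (1 : S)) := by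
  induction z using OreLocalization.ind with
  | _ r s => exact ⟨r, s, by rw [OreLocalization.mul_div_one, one_mul]⟩

lemma loc_num_central (hcen : (S : Set R) ⊆ Set.center R) (s : S) (z : R[S⁻¹]) :
    ((s : R) /ₒ (1 : S)) * z = z * ((s : R) /ₒ (1 : S)) := by
  induction z using OreLocalization.ind with
  | _ r t =>
    rw [OreLocalization.mul_div_one]
    rw [oreDiv_mul_char (s : R) r (1 : S) t (s : R) t (((hcen s.2).comm (t : R)).symm)]
    rw [mul_one, (hcen s.2).comm r]

lemma loc_inv_central (hcen : (S : Set R) ⊆ Set.center R) (s : S) (z : R[S⁻¹]) :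
    ((1 : R) /ₒ s) * z = z * ((1 : R) /ₒ s) := by
  have h1 : ((s : R) /ₒ (1 : S)) * ((1 : R) /ₒ s) = 1 := (numeratorUnit s).val_inv
  have h2 : ((1 : R) /ₒ s) * ((s : R) /ₒ (1 : S)) = 1 := (numeratorUnit s).inv_val
  calc ((1 : R) /ₒ s) * z
      = ((1 : R) /ₒ s) * (z * (((s : R) /ₒ (1 : S)) * ((1 : R) /ₒ s))) := by rw [h1, mul_one]
    _ = ((1 : R) /ₒ s) * ((s : R) /ₒ (1 : S)) * z * ((1 : R) /ₒ s) := by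
        rw [← mul_assoc z, ← loc_num_central hcen s z]; simp only [mul_assoc]
    _ = z * ((1 : R) /ₒ s) := by rw [h2, one_mul]

lemma loc_inv_isUnit (s : S) : IsUnit ((1 : R) /ₒ s : R[S⁻¹]) :=
  ⟨(numeratorUnit s)⁻¹, rfl⟩

lemma loc_inj (hcen : (S : Set R) ⊆ Set.center R) (hreg : (S : Set R) ⊆ nonZeroDivisors R)
    {r r' : R} (h : (r /ₒ (1 : S) : R[S⁻¹]) = r' /ₒ (1 : S)) : r = r' := by
  have hS : S ≤ nonZeroDivisorsLeft R := by
    intro s hs y hy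
    refine (hreg hs).2 y ?_
    rw [(hcen hs).comm y] at hy
    exact hy
  apply OreLocalization.numeratorHom_inj hS
  rw [numeratorHom_apply, numeratorHom_apply]
  exact h

/-- key commutation computation -/
lemma comm3 {M : Type*} [Monoid M] (c₁ c₂ c₃ u v w : M)
    (h₂ : ∀ z, c₂ * z = z * c₂) (h₃ : ∀ z, c₃ * z = z * c₃) :
    (c₁ * u) * (c₂ * v) * (c₃ * w) = (c₁ * c₂ * c₃) * (u * v * w) := by
  have swap : ∀ (e : M), (∀ z, e * z = z * e) → ∀ y X : M, y * (e * X) = e * (y * X) := by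
    intro e he y X
    rw [← mul_assoc, ← he y, mul_assoc]
  simp only [mul_assoc]
  rw [swap c₂ h₂ u, swap c₃ h₃ v, swap c₃ h₃ u]

lemma sNil_oreDiv_one (hcen : (S : Set R) ⊆ Set.center R) {x : R} (hx : SNil x) :
    SNil ((x /ₒ (1 : S) : R[S⁻¹])) := by
  intro f hf0 hstep
  have hinvc : ∀ t : S, ((1 : R) /ₒ t : R[S⁻¹]) ∈ Set.center (R[S⁻¹]) :=
    fun t => Semigroup.mem_center_iff.mpr fun g => (loc_inv_central hcen t g).symm
  let M : ℕ → Type _ := fun n =>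
    Σ' (p : R) (c : R[S⁻¹]), c ∈ Set.center (R[S⁻¹]) ∧ f n = c * (p /ₒ (1 : S))
  let G : ∀ n, M n := fun n =>
    Nat.rec (motive := M)
      ⟨x, 1, Set.one_mem_center, by rw [hf0, one_mul]⟩
      (fun k prev =>
        ⟨prev.1 * ((loc_decomp (hstep k).choose).choose) * prev.1,
          prev.2.1 * prev.2.1 * ((1 : R) /ₒ ((loc_decomp (hstep k).choose).choose_spec).choose),
          Set.mul_mem_center (Set.mul_mem_center prev.2.2.1 prev.2.2.1)
            (hinvc ((loc_decomp (hstep k).choose).choose_spec).choose),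
          by
            obtain ⟨p, c, hcc, hfe⟩ := prev
            have hr := (hstep k).choose_spec
            have hdec := ((loc_decomp (hstep k).choose).choose_spec).choose_spec
            dsimp only
            generalize hq : (hstep k).choose = rr at hr hdec ⊢
            rw [hr, hfe]
            conv_lhs => rw [hdec]
            rw [comm3 c ((1:R) /ₒ ((loc_decomp rr).choose_spec).choose) c
              (p /ₒ (1:S)) ((loc_decomp rr).choose /ₒ (1:S)) (p /ₒ (1:S))
              (fun z => loc_inv_central hcen _ z)
              (fun z => (Set.mem_center_iff.mp hcc).comm z)]
            rw [OreLocalization.mul_div_one, OreLocalization.mul_div_one]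
            rw [mul_assoc c ((1:R) /ₒ ((loc_decomp rr).choose_spec).choose) c,
              loc_inv_central hcen _ c, ← mul_assoc]⟩) n
  obtain ⟨n, hn⟩ := hx (fun n => (G n).1) rfl (fun n => ⟨_, rfl⟩)
  refine ⟨n, ?_⟩
  have hfe := (G n).2.2.2
  have h2 : f n = (G n).2.1 * ((0 : R) /ₒ (1 : S)) :=
    hfe.trans (congrArg (fun y => (G n).2.1 * (y /ₒ (1 : S))) hn)
  rw [h2, OreLocalization.zero_oreDiv', mul_zero]

end Loc

open OreLocalization

/-- If `S` is a multiplicatively closed set of central regular elements, then `R` is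
`P`-symmetric if and only if the localization `S⁻¹R` is `P`-symmetric. -/
theorem isPSymmetric_iff_oreLocalization (R : Type*) [Ring R] (S : Submonoid R)
    [OreLocalization.OreSet S]
    (hcen : (S : Set R) ⊆ Set.center R) (hreg : (S : Set R) ⊆ nonZeroDivisors R) :
    IsPSymmetric R ↔ IsPSymmetric (OreLocalization S R) := by
  constructor
  · intro hR A B C hABC
    obtain ⟨a, u, rfl⟩ := loc_decomp A
    obtain ⟨b, v, rfl⟩ := loc_decomp B
    obtain ⟨c, w, rfl⟩ := loc_decomp C
    rw [comm3 _ _ _ _ _ _ (loc_inv_central hcen v) (loc_inv_central hcen w),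
      OreLocalization.mul_div_one, OreLocalization.mul_div_one] at hABC
    have hU : IsUnit ((((1:R) /ₒ u) * ((1:R) /ₒ v) * ((1:R) /ₒ w)) : R[S⁻¹]) :=
      ((loc_inv_isUnit u).mul (loc_inv_isUnit v)).mul (loc_inv_isUnit w)
    rw [hU.mul_right_eq_zero] at hABC
    have habc : a * b * c = 0 := by
      apply loc_inj hcen hreg
      rw [hABC, OreLocalization.zero_oreDiv']
    have hbac : b * a * c ∈ primeRadical R := hR a b c habc
    have hmem : ((b * a * c) /ₒ (1 : S) : R[S⁻¹]) ∈ primeRadical (R[S⁻¹]) :=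
      mem_primeRadical_of_sNil (sNil_oreDiv_one hcen (sNil_of_mem_primeRadical hbac))
    rw [comm3 _ _ _ _ _ _ (loc_inv_central hcen u) (loc_inv_central hcen w),
      OreLocalization.mul_div_one, OreLocalization.mul_div_one]
    exact primeRadical_mul_mem_left _ hmem
  · intro hloc a b c habc
    have h0 : ((a /ₒ (1:S)) * (b /ₒ (1:S)) * (c /ₒ (1:S)) : R[S⁻¹]) = 0 := by
      rw [OreLocalization.mul_div_one, OreLocalization.mul_div_one, habc,
        OreLocalization.zero_oreDiv']
    have hmem := hloc _ _ _ h0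
    rw [OreLocalization.mul_div_one, OreLocalization.mul_div_one] at hmem
    have hsn : SNil (((b * a * c) /ₒ (1:S)) : R[S⁻¹]) := sNil_of_mem_primeRadical hmem
    apply mem_primeRadical_of_sNil
    intro f hf0 hstep
    obtain ⟨n, hn⟩ := hsn (fun n => f n /ₒ (1:S))
      (by show f 0 /ₒ (1:S) = _; rw [hf0])
      (fun n => by
        obtain ⟨r, hr⟩ := hstep n
        exact ⟨r /ₒ (1:S), by
          show f (n+1) /ₒ (1:S) = (f n /ₒ (1:S)) * (r /ₒ (1:S)) * (f n /ₒ (1:S))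
          rw [OreLocalization.mul_div_one, OreLocalization.mul_div_one, hr]⟩)
    refine ⟨n, ?_⟩
    apply loc_inj hcen hreg
    rw [OreLocalization.zero_oreDiv']
    exact hn
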